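/- Unbiasedness of the RS+FD[OUE-r] estimator (Theorem 'est_oue_r'): let d ≥ 1 and c ≥ 2 be integers, p, q ∈ [0,1] with p ≠ q, and let n be a positive integer. Suppose that among the n users exactly f·n hold the value v (where 0 ≤ f ≤ 1 and f·n is an integer) and each user independently reports the bit corresponding to v as 1 with probability p/d + ((d−1)/d)·(p/c + (c−1)·q/c) if it holds v and with probability q/d + ((d−1)/d)·(p/c + (c−1)·q/c) otherwise. Then the estimator f̂ = (N·d·c − n·(q·c + (p−q)·(d−1) + q·c·(d−1)))/(n·c·(p−q)), where N is the number of users reporting bit 1 for v, satisfies E[f̂] = f. -/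

import Mathlib

open MeasureTheory ProbabilityTheory

/-- Unbiasedness of the RS+FD[OUE-r] estimator (Theorem `est_oue_r`). -/
theorem est_oue_r
    {Ω : Type*} [MeasureSpace Ω] [IsProbabilityMeasure (ℙ : Measure Ω)]
    (d c : ℕ) (hd : 1 ≤ d) (hc : 2 ≤ c)
    (p q : ℝ) (hp : 0 ≤ p ∧ p ≤ 1) (hq : 0 ≤ q ∧ q ≤ 1) (hpq : p ≠ q)
    (n : ℕ) (hn : 0 < n)
    (f : ℝ) (hf0 : 0 ≤ f) (hf1 : f ≤ 1)
    (holds : Fin n → Bool)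
    (hcount : (∑ i, if holds i then (1 : ℝ) else 0) = f * n)
    (report : Fin n → Ω → Bool)
    (hmeas : ∀ i, Measurable (report i))
    (hindep : iIndepFun report ℙ)
    (hps : ∀ i, holds i = true →
      ℙ {ω | report i ω = true}
        = ENNReal.ofReal (p / (d : ℝ)
            + (((d : ℝ) - 1) / (d : ℝ)) * (p / (c : ℝ) + ((c : ℝ) - 1) * q / (c : ℝ))))
    (hqs : ∀ i, holds i = false →
      ℙ {ω | report i ω = true}
        = ENNReal.ofReal (q / (d : ℝ)
            + (((d : ℝ) - 1) / (d : ℝ)) * (p / (c : ℝ) + ((c : ℝ) - 1) * q / (c : ℝ)))) :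
    ∫ ω, ((∑ i, if report i ω then (1 : ℝ) else 0) * (d : ℝ) * (c : ℝ)
        - (n : ℝ) * (q * (c : ℝ) + (p - q) * ((d : ℝ) - 1) + q * (c : ℝ) * ((d : ℝ) - 1)))
        / ((n : ℝ) * (c : ℝ) * (p - q)) ∂ℙ = f := by
  have hd0 : (0:ℝ) < d := by exact_mod_cast hd
  have hc0 : (0:ℝ) < c := by positivity
  have hn0 : (0:ℝ) < n := by exact_mod_cast hn
  have hd1 : (1:ℝ) ≤ d := by exact_mod_cast hd
  have hc1 : (1:ℝ) ≤ c := by exact_mod_cast (le_trans (by norm_num) hc)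
  set A : ℝ := p / (d : ℝ)
            + (((d : ℝ) - 1) / (d : ℝ)) * (p / (c : ℝ) + ((c : ℝ) - 1) * q / (c : ℝ)) with hAdef
  set B : ℝ := q / (d : ℝ)
            + (((d : ℝ) - 1) / (d : ℝ)) * (p / (c : ℝ) + ((c : ℝ) - 1) * q / (c : ℝ)) with hBdef
  have hr0 : 0 ≤ (((d : ℝ) - 1) / (d : ℝ)) * (p / (c : ℝ) + ((c : ℝ) - 1) * q / (c : ℝ)) := by
    apply mul_nonneg
    · apply div_nonneg (by linarith) hd0.le
    · have h1 : 0 ≤ p / (c:ℝ) := div_nonneg hp.1 hc0.le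
      have h2 : 0 ≤ ((c:ℝ) - 1) * q / c := div_nonneg (mul_nonneg (by linarith) hq.1) hc0.le
      linarith
  have hA0 : 0 ≤ A := add_nonneg (div_nonneg hp.1 hd0.le) hr0
  have hB0 : 0 ≤ B := add_nonneg (div_nonneg hq.1 hd0.le) hr0
  have hms : ∀ i, MeasurableSet {ω | report i ω = true} := fun i =>
    (hmeas i) (MeasurableSet.singleton true)
  have hind : ∀ i, (fun ω => if report i ω then (1:ℝ) else 0)
      = Set.indicator {ω | report i ω = true} (fun _ => (1:ℝ)) := by
    intro i; funext ω; by_cases h : report i ω <;> simp [Set.indicator, h]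
  have hgint : ∀ i, Integrable (fun ω => if report i ω then (1:ℝ) else 0) ℙ := by
    intro i
    rw [hind i]
    exact (integrable_indicator_iff (hms i)).mpr
      (integrableOn_const (measure_lt_top _ _).ne)
  have hval : ∀ i, ∫ ω, (if report i ω then (1:ℝ) else 0) ∂ℙ
      = if holds i then A else B := by
    intro i
    rw [show (∫ ω, (if report i ω then (1:ℝ) else 0) ∂ℙ)
        = ∫ ω, Set.indicator {ω | report i ω = true} (fun _ => (1:ℝ)) ω ∂ℙ from by
      rw [← hind i]]
    rw [integral_indicator_const (1:ℝ) (hms i)]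
    cases h : holds i
    · rw [measureReal_def, hqs i h]; simp [ENNReal.toReal_ofReal hB0, ← hBdef]
    · rw [measureReal_def, hps i h]; simp [ENNReal.toReal_ofReal hA0, ← hAdef]
  have hsum : ∫ ω, (∑ i, if report i ω then (1:ℝ) else 0) ∂ℙ
      = (n:ℝ) * B + (f * n) * (A - B) := by
    rw [integral_finset_sum _ (fun i _ => hgint i)]
    have : ∀ i : Fin n, (∫ ω, (if report i ω then (1:ℝ) else 0) ∂ℙ)
        = B + (if holds i then (1:ℝ) else 0) * (A - B) := by
      intro i; rw [hval i]; by_cases h : holds i <;> simp [h]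
    rw [Finset.sum_congr rfl (fun i _ => this i), Finset.sum_add_distrib,
      Finset.sum_const, ← Finset.sum_mul, hcount]
    simp [mul_comm]
  have hrw : (fun ω => ((∑ i, if report i ω then (1:ℝ) else 0) * (d : ℝ) * (c : ℝ)
        - (n : ℝ) * (q * (c : ℝ) + (p - q) * ((d : ℝ) - 1) + q * (c : ℝ) * ((d : ℝ) - 1)))
        / ((n : ℝ) * (c : ℝ) * (p - q)))
      = fun ω => (∑ i, if report i ω then (1:ℝ) else 0)
          * ((d : ℝ) * (c : ℝ) / ((n : ℝ) * (c : ℝ) * (p - q)))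
        - (n : ℝ) * (q * (c : ℝ) + (p - q) * ((d : ℝ) - 1) + q * (c : ℝ) * ((d : ℝ) - 1))
          / ((n : ℝ) * (c : ℝ) * (p - q)) := by
    funext ω; ring
  rw [hrw, integral_sub ((integrable_finset_sum _ (fun i _ => hgint i)).mul_const _)
    (integrable_const _), integral_mul_const, integral_const, hsum]
  simp only [measureReal_def, measure_univ, ENNReal.toReal_one, one_smul, smul_eq_mul]
  have hpq' : p - q ≠ 0 := sub_ne_zero.mpr hpq
  rw [hAdef, hBdef]
  field_simp
  ring
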